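/- arXiv:1107.1544 — 4 statements merged into one kernel-verified Lean document; each statement's English description precedes it below -/
import Mathlib

section
/- Let G be an N_b×m complex matrix with orthonormal columns (GᴴG = I_m), let H be an N_e×N_b complex matrix, u ∈ ℂ^{N_e}, and let p > 0, σ > 0 be reals. Set a = Gᴴ Hᴴ u ∈ ℂ^m, B = H G ∈ ℂ^{N_e×m}, and M = (σ²/p) I_m + Bᴴ B (which is Hermitian positive definite). Then for every c ∈ ℂ^m with cᴴc = 1, uᴴ ( p H G c cᴴ Gᴴ Hᴴ + σ² I )⁻¹ u ≥ (1/σ²) ( uᴴ u − aᴴ M⁻¹ a ), and if a ≠ 0 equality is attained at c = M⁻¹ a / ‖M⁻¹ a‖. -/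
open Matrix
open scoped ComplexOrder

namespace OptJamAux

lemma real_of_nonneg {z : ℂ} (hz : 0 ≤ z) : (z.re : ℂ) = z :=
  Complex.ext (Complex.ofReal_re _) (by simp [(Complex.le_def.mp hz).2.symm])

lemma cs_dot (n : ℕ) (x y : Fin n → ℂ) :
    (star x ⬝ᵥ y) * (star y ⬝ᵥ x) ≤ (star x ⬝ᵥ x) * (star y ⬝ᵥ y) := by
  have h := inner_mul_inner_self_le (𝕜 := ℂ)
    ((WithLp.equiv 2 (Fin n → ℂ)).symm x) ((WithLp.equiv 2 (Fin n → ℂ)).symm y)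
  simp only [WithLp.equiv_symm_apply, EuclideanSpace.inner_toLp_toLp] at h
  rw [dotProduct_comm y (star x), dotProduct_comm x (star y), dotProduct_comm x (star x),
    dotProduct_comm y (star y)] at h
  have hyx : star y ⬝ᵥ x = star (star x ⬝ᵥ y) := star_dotProduct _ _
  rw [hyx, ← real_of_nonneg (dotProduct_star_self_nonneg x),
    ← real_of_nonneg (dotProduct_star_self_nonneg y), Complex.star_def, Complex.mul_conj',
    ← Complex.ofReal_mul, ← Complex.ofReal_pow, Complex.real_le_real]
  simpa [hyx, Complex.normSq_eq_norm_sq, sq, RCLike.re] using h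

lemma conj_vmv (n m : ℕ) (B : Matrix (Fin n) (Fin m) ℂ) (c : Fin m → ℂ) :
    B * vecMulVec c (star c) * Bᴴ = vecMulVec (B *ᵥ c) (star (B *ᵥ c)) := by
  ext i j
  simp only [mul_apply, vecMulVec_apply, mulVec, dotProduct, conjTranspose_apply, Pi.star_apply,
    star_sum, star_mul', Finset.sum_mul, Finset.mul_sum]
  refine Finset.sum_congr rfl fun k _ => Finset.sum_congr rfl fun l _ => by ring

lemma vmv_mulVec (n : ℕ) (t x : Fin n → ℂ) :
    vecMulVec t (star t) *ᵥ x = (star t ⬝ᵥ x) • t := by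
  ext i
  simp [mulVec, vecMulVec_apply, dotProduct, Finset.mul_sum, mul_comm, mul_left_comm]

lemma vmv_sq (n : ℕ) (t : Fin n → ℂ) :
    vecMulVec t (star t) * vecMulVec t (star t) = (star t ⬝ᵥ t) • vecMulVec t (star t) := by
  ext i j
  simp only [mul_apply, vecMulVec_apply, Matrix.smul_apply, smul_eq_mul, dotProduct, Finset.sum_mul,
    Pi.star_apply]
  refine Finset.sum_congr rfl fun k _ => by ring

/-- Sherman–Morrison style formula for the quadratic form of the inverse. -/
lemma key_formula (n : ℕ) (t u : Fin n → ℂ) (p σ2 : ℝ) (hp : 0 < p) (hσ : 0 < σ2) :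
    star u ⬝ᵥ (((p : ℂ) • vecMulVec t (star t) + (σ2 : ℂ) • 1)⁻¹ *ᵥ u)
      = ((σ2 : ℂ))⁻¹ * (star u ⬝ᵥ u -
          ((p : ℂ) / ((σ2 : ℂ) + p * (star t ⬝ᵥ t))) * ((star u ⬝ᵥ t) * (star t ⬝ᵥ u))) := by
  set s : ℂ := star t ⬝ᵥ t with hs
  have hs0 : 0 ≤ s := dotProduct_star_self_nonneg t
  have hsre : (s.re : ℂ) = s := real_of_nonneg hs0
  have hsre0 : 0 ≤ s.re := (Complex.le_def.mp hs0).1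
  have hD : (σ2 : ℂ) + p * s = ((σ2 + p * s.re : ℝ) : ℂ) := by
    push_cast [hsre]; ring
  have hDne : (σ2 : ℂ) + p * s ≠ 0 := by
    rw [hD]
    exact_mod_cast (by positivity : (0:ℝ) < σ2 + p * s.re).ne'
  have hσne : (σ2 : ℂ) ≠ 0 := by exact_mod_cast hσ.ne'
  have hinv : ((p : ℂ) • vecMulVec t (star t) + (σ2 : ℂ) • 1)⁻¹
      = ((σ2 : ℂ))⁻¹ • (1 - ((p : ℂ) / ((σ2 : ℂ) + p * s)) • vecMulVec t (star t)) := by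
    apply inv_eq_right_inv
    simp only [Matrix.mul_smul, Matrix.smul_mul, Matrix.add_mul, Matrix.mul_sub, Matrix.mul_one,
      Matrix.one_mul, smul_smul, vmv_sq, ← hs]
    match_scalars <;> field_simp <;> ring
  rw [hinv]
  rw [Matrix.smul_mulVec, Matrix.sub_mulVec, Matrix.smul_mulVec, vmv_mulVec,
    one_mulVec]
  rw [dotProduct_smul, dotProduct_sub, dotProduct_smul, dotProduct_smul]
  simp only [smul_eq_mul]
  ring

end OptJamAux

open OptJamAux

/-- Equations (16)–(22) of the paper: among all unit-norm jamming beamformers `t′ = G c`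
lying in the range of `G` (which has orthonormal columns), the quantity
`uᴴ(p H G c cᴴ Gᴴ Hᴴ + σ² I)⁻¹ u` is bounded below by
`(1/σ²)(uᴴu − aᴴ M⁻¹ a)` where `a = Gᴴ Hᴴ u`, `B = H G`, `M = (σ²/p) I + Bᴴ B`,
with equality at `c = M⁻¹ a / ‖M⁻¹ a‖` when `a ≠ 0`  (‖·‖ is the Euclidean norm). -/
theorem optimal_jamming_beamformer_in_subspace
    (Nb Ne m : ℕ) (G : Matrix (Fin Nb) (Fin m) ℂ) (hG : Gᴴ * G = 1)
    (H : Matrix (Fin Ne) (Fin Nb) ℂ) (u : Fin Ne → ℂ) (p σ : ℝ) (hp : 0 < p) (hσ : 0 < σ)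
    (a : Fin m → ℂ) (ha : a = (Gᴴ * Hᴴ) *ᵥ u)
    (B : Matrix (Fin Ne) (Fin m) ℂ) (hB : B = H * G)
    (M : Matrix (Fin m) (Fin m) ℂ) (hM : M = ((σ ^ 2 / p : ℝ) : ℂ) • 1 + Bᴴ * B) :
    (∀ c : Fin m → ℂ, star c ⬝ᵥ c = 1 →
      ((σ ^ 2 : ℝ) : ℂ)⁻¹ * (star u ⬝ᵥ u - star a ⬝ᵥ (M⁻¹ *ᵥ a)) ≤
        star u ⬝ᵥ
          (((p : ℂ) • (B * vecMulVec c (star c) * Bᴴ) + ((σ ^ 2 : ℝ) : ℂ) • 1)⁻¹ *ᵥ u)) ∧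
    (a ≠ 0 →
      ∀ c : Fin m → ℂ,
        c = ((Real.sqrt ((star (M⁻¹ *ᵥ a) ⬝ᵥ (M⁻¹ *ᵥ a)).re) : ℝ) : ℂ)⁻¹ • (M⁻¹ *ᵥ a) →
        star u ⬝ᵥ
            (((p : ℂ) • (B * vecMulVec c (star c) * Bᴴ) + ((σ ^ 2 : ℝ) : ℂ) • 1)⁻¹ *ᵥ u) =
          ((σ ^ 2 : ℝ) : ℂ)⁻¹ * (star u ⬝ᵥ u - star a ⬝ᵥ (M⁻¹ *ᵥ a))) := by
  have hσ2 : (0:ℝ) < σ ^ 2 := by positivity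
  have hpne : (p : ℂ) ≠ 0 := by exact_mod_cast hp.ne'
  -- `a = Bᴴ *ᵥ u`
  have hBa : Bᴴ *ᵥ u = a := by rw [ha, hB, conjTranspose_mul]
  -- M is positive definite
  have hMherm : M.IsHermitian := by
    rw [hM]
    refine Matrix.IsHermitian.add ?_ (isHermitian_conjTranspose_mul_self B)
    simp [Matrix.IsHermitian, conjTranspose_smul, Complex.star_def, Complex.conj_ofReal]
  have hMquad : ∀ x : Fin m → ℂ,
      star x ⬝ᵥ (M *ᵥ x) = ((σ ^ 2 / p : ℝ) : ℂ) * (star x ⬝ᵥ x)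
        + star (B *ᵥ x) ⬝ᵥ (B *ᵥ x) := by
    intro x
    rw [hM, Matrix.add_mulVec, Matrix.smul_mulVec, one_mulVec, dotProduct_add,
      dotProduct_smul, smul_eq_mul, ← mulVec_mulVec, dotProduct_mulVec, ← star_mulVec]
  have hMpd : M.PosDef := by
    refine Matrix.PosDef.of_dotProduct_mulVec_pos hMherm fun x hx => ?_
    rw [hMquad]
    have h1 : (0:ℂ) < ((σ ^ 2 / p : ℝ) : ℂ) * (star x ⬝ᵥ x) := by
      apply mul_pos
      · exact_mod_cast (by positivity : (0:ℝ) < σ ^ 2 / p)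
      · exact dotProduct_star_self_pos_iff.mpr hx
    exact lt_of_lt_of_le h1 (le_add_of_nonneg_right (dotProduct_star_self_nonneg _))
  have hMdet : IsUnit M.det := (Matrix.isUnit_iff_isUnit_det M).mp hMpd.isUnit
  set d : Fin m → ℂ := M⁻¹ *ᵥ a with hd
  have hMd : M *ᵥ d = a := by
    rw [hd, mulVec_mulVec, Matrix.mul_nonsing_inv _ hMdet, one_mulVec]
  -- `q := aᴴ M⁻¹ a`
  set q : ℂ := star a ⬝ᵥ d with hq
  have hqd : q = star d ⬝ᵥ (M *ᵥ d) := by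
    rw [hq, ← hMd, star_mulVec, ← dotProduct_mulVec, hMherm.eq, hMd]
  have hq0 : 0 ≤ q := by
    rw [hqd]; exact hMpd.posSemidef.dotProduct_mulVec_nonneg d
  have hqre : ((q.re : ℝ) : ℂ) = q := real_of_nonneg hq0
  -- factor M = Lᴴ L
  obtain ⟨L, hL⟩ : ∃ L : Matrix (Fin m) (Fin m) ℂ, M = Lᴴ * L := by
    open scoped MatrixOrder Matrix.Norms.L2Operator in
    exact CStarAlgebra.nonneg_iff_eq_star_mul_self.mp hMpd.posSemidef.nonneg
  have hdotM : ∀ x y : Fin m → ℂ,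
      star x ⬝ᵥ (M *ᵥ y) = star (L *ᵥ x) ⬝ᵥ (L *ᵥ y) := by
    intro x y
    rw [hL, ← mulVec_mulVec, dotProduct_mulVec, ← star_mulVec]
  -- generic facts for arbitrary c
  have hct : ∀ c : Fin m → ℂ, star (B *ᵥ c) ⬝ᵥ u = star c ⬝ᵥ a := by
    intro c
    rw [star_mulVec, ← dotProduct_mulVec, hBa]
  have hcs : ∀ c : Fin m → ℂ, star (B *ᵥ c) ⬝ᵥ (B *ᵥ c) = star c ⬝ᵥ ((Bᴴ * B) *ᵥ c) := by
    intro c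
    rw [star_mulVec, ← dotProduct_mulVec, mulVec_mulVec]
  constructor
  · -- inequality
    intro c hc
    rw [conj_vmv, key_formula _ _ _ _ _ hp hσ2]
    have hσinv : (0:ℂ) ≤ ((σ ^ 2 : ℝ) : ℂ)⁻¹ := by
      rw [← Complex.ofReal_inv, ← Complex.ofReal_zero, Complex.real_le_real]
      positivity
    refine mul_le_mul_of_nonneg_left (sub_le_sub_left ?_ _) hσinv
    -- central inequality
    set w : ℂ := star c ⬝ᵥ a with hw
    have hut : star u ⬝ᵥ (B *ᵥ c) = star w := by
      rw [star_dotProduct, hct]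
    rw [hct, hut]
    -- Cauchy–Schwarz
    have hwd : w = star (L *ᵥ c) ⬝ᵥ (L *ᵥ d) := by rw [hw, ← hMd, hdotM]
    have hws : star w = star (L *ᵥ d) ⬝ᵥ (L *ᵥ c) := by
      rw [hwd, star_dotProduct]; simp
    set E : ℂ := star c ⬝ᵥ (M *ᵥ c) with hE
    have hEL : E = star (L *ᵥ c) ⬝ᵥ (L *ᵥ c) := hdotM c c
    have hqL : q = star (L *ᵥ d) ⬝ᵥ (L *ᵥ d) := by rw [hqd, hdotM]
    have hCS : star w * w ≤ q * E := by
      rw [hws, hwd, hqL, hEL]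
      exact cs_dot _ _ _
    -- real bookkeeping
    have hs0 : (0:ℂ) ≤ star (B *ᵥ c) ⬝ᵥ (B *ᵥ c) := dotProduct_star_self_nonneg _
    have hsre : (((star (B *ᵥ c) ⬝ᵥ (B *ᵥ c)).re : ℝ) : ℂ) = star (B *ᵥ c) ⬝ᵥ (B *ᵥ c) :=
      real_of_nonneg hs0
    set sre : ℝ := (star (B *ᵥ c) ⬝ᵥ (B *ᵥ c)).re with hsre'
    have hsre0 : 0 ≤ sre := (Complex.le_def.mp hs0).1
    have hpE : (p : ℂ) * E = (σ ^ 2 : ℝ) + p * (star (B *ᵥ c) ⬝ᵥ (B *ᵥ c)) := by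
      rw [hE, hMquad, hc, mul_one, mul_add, ← Complex.ofReal_mul,
        mul_div_cancel₀ _ hp.ne']
    have hD : ((σ ^ 2 : ℝ) : ℂ) + p * (star (B *ᵥ c) ⬝ᵥ (B *ᵥ c))
        = ((σ ^ 2 + p * sre : ℝ) : ℂ) := by
      rw [← hsre]; push_cast; ring
    have hDpos : (0:ℝ) < σ ^ 2 + p * sre := by positivity
    have hwre : star w * w = ((Complex.normSq w : ℝ) : ℂ) := by
      rw [Complex.star_def, mul_comm, Complex.mul_conj]
    -- reduce to a real inequality
    have hEre : E = (((σ ^ 2 + p * sre) / p : ℝ) : ℂ) := by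
      have h2 : (p : ℂ) * E = (((σ ^ 2 + p * sre : ℝ)) : ℂ) := by rw [hpE, hD]
      rw [Complex.ofReal_div, eq_div_iff (by exact_mod_cast hp.ne' : (p:ℂ) ≠ 0)]
      linear_combination h2
    have hCSre : Complex.normSq w ≤ q.re * ((σ ^ 2 + p * sre) / p) := by
      have := hCS
      rw [hwre, hEre, ← hqre, ← Complex.ofReal_mul, Complex.real_le_real] at this
      exact this
    rw [hD, hwre, ← hqre, ← Complex.ofReal_div, ← Complex.ofReal_mul, Complex.real_le_real]
    rw [div_mul_eq_mul_div, div_le_iff₀ hDpos]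
    have hkey : p * Complex.normSq w ≤ p * (q.re * ((σ ^ 2 + p * sre) / p)) :=
      mul_le_mul_of_nonneg_left hCSre hp.le
    calc p * Complex.normSq w ≤ p * (q.re * ((σ ^ 2 + p * sre) / p)) := hkey
      _ = q.re * (σ ^ 2 + p * sre) := by field_simp
  · -- equality case
    intro haz c hc
    have hdz : d ≠ 0 := by
      intro h0
      exact haz (by rw [← hMd, h0, mulVec_zero])
    set q' : ℂ := star d ⬝ᵥ d with hq'
    have hq'0 : 0 ≤ q' := dotProduct_star_self_nonneg d
    have hq're : ((q'.re : ℝ) : ℂ) = q' := real_of_nonneg hq'0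
    have hq'pos : 0 < q'.re := by
      rcases lt_or_eq_of_le (Complex.le_def.mp hq'0).1 with h | h
      · exact h
      · exfalso
        apply hdz
        apply dotProduct_star_self_eq_zero.mp
        rw [← hq', ← hq're, ← h]; simp
    set k : ℝ := (Real.sqrt q'.re)⁻¹ with hk
    have hkpos : 0 < k := by
      rw [hk]; exact inv_pos.mpr (Real.sqrt_pos.mpr hq'pos)
    have hk2r : k ^ 2 * q'.re = 1 := by
      rw [hk, inv_pow, Real.sq_sqrt hq'pos.le, inv_mul_cancel₀ hq'pos.ne']
    have hk2 : (k : ℂ) ^ 2 * q' = 1 := by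
      rw [← hq're]
      calc (k : ℂ) ^ 2 * (q'.re : ℂ) = ((k ^ 2 * q'.re : ℝ) : ℂ) := by push_cast; ring
        _ = 1 := by rw [hk2r]; norm_num
    have hqpos : 0 < q := by
      rw [hqd]; exact hMpd.dotProduct_mulVec_pos hdz
    have hqne : q ≠ 0 := hqpos.ne'
    have hcd : c = (k : ℂ) • d := by
      rw [hc, hk, Complex.ofReal_inv]
    -- scalar data for c
    have hstarc : star c = (k : ℂ) • star d := by
      rw [hcd]; ext i; simp [Complex.star_def, Complex.conj_ofReal]
    have hqstar : star q = q := by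
      rw [← hqre]; simp [Complex.star_def, Complex.conj_ofReal]
    have hca : star c ⬝ᵥ a = (k : ℂ) * q := by
      rw [hstarc, smul_dotProduct, smul_eq_mul]
      congr 1
      rw [star_dotProduct, ← hq, hqstar]
    have hss : star (B *ᵥ c) ⬝ᵥ (B *ᵥ c)
        = (k : ℂ) ^ 2 * (star d ⬝ᵥ ((Bᴴ * B) *ᵥ d)) := by
      rw [hcs, hstarc, hcd, Matrix.mulVec_smul, dotProduct_smul, smul_dotProduct,
        smul_eq_mul, smul_eq_mul]
      ring
    set sB : ℂ := star d ⬝ᵥ ((Bᴴ * B) *ᵥ d) with hsB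
    have hpq : (p : ℂ) * q = (σ ^ 2 : ℝ) * q' + p * sB := by
      have h1 : q = ((σ ^ 2 / p : ℝ) : ℂ) * q' + sB := by
        rw [hqd, hMquad, hcs, ← hq', ← hsB]
      rw [h1, mul_add, ← mul_assoc, ← Complex.ofReal_mul, mul_div_cancel₀ _ hp.ne']
    have hut : star u ⬝ᵥ (B *ᵥ c) = star (star c ⬝ᵥ a) := by
      rw [← hct c, ← star_dotProduct]
    have hDq : ((σ ^ 2 : ℝ) : ℂ) + p * (star (B *ᵥ c) ⬝ᵥ (B *ᵥ c)) = (p : ℂ) * (k:ℂ)^2 * q := by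
      rw [hss]
      linear_combination (-((k:ℂ)^2)) * hpq + (-(((σ ^ 2 : ℝ) : ℂ))) * hk2
    have hkne : (k : ℂ) ≠ 0 := by exact_mod_cast hkpos.ne'
    have hstq : star ((k:ℂ) * q) = (k:ℂ) * q := by
      rw [star_mul']
      rw [hqstar]
      simp [Complex.star_def, Complex.conj_ofReal]
    rw [conj_vmv, key_formula _ _ _ _ _ hp hσ2]
    congr 1
    congr 1
    rw [hut, hct, hca, hstq, hDq]
    field_simp
end

section
/- Let k > 0 and p > 0 be reals, set α₁ = 1/(1 + k p) and α₂ = k p/(1 + k p), and define g : (0,∞) → ℝ by g(x) = (1/α₁)^{α₁} · (k x / α₂)^{α₂}. Then g(p) = 1 + k p and the derivative of g at p equals k; that is, g agrees to first order at p with the function f(x) = 1 + k x. -/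
/-- Best local monomial approximation claim in Lemma 2 of the paper: with
`α₁ = 1/(1+kp)`, `α₂ = kp/(1+kp)`, the condensed monomial
`g(x) = (1/α₁)^{α₁} (k x/α₂)^{α₂}` satisfies `g(p) = 1 + kp` and `g′(p) = k`,
i.e. `g` agrees to first order at `p` with `f(x) = 1 + kx`. -/
theorem condensed_monomial_tangent
    (k p : ℝ) (hk : 0 < k) (hp : 0 < p)
    (α₁ α₂ : ℝ) (hα₁ : α₁ = 1 / (1 + k * p)) (hα₂ : α₂ = k * p / (1 + k * p))
    (g : ℝ → ℝ) (hg : ∀ x, g x = (1 / α₁) ^ α₁ * (k * x / α₂) ^ α₂) :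
    g p = 1 + k * p ∧ HasDerivAt g k p := by
  have hkp : 0 < k * p := mul_pos hk hp
  set s : ℝ := 1 + k * p with hs_def
  have hs : (0:ℝ) < s := by positivity
  have hα₁' : (1 : ℝ) / α₁ = s := by
    rw [hα₁]; field_simp
  have hα₂pos : 0 < α₂ := by rw [hα₂]; positivity
  have hα₂ne : α₂ ≠ 0 := ne_of_gt hα₂pos
  have hsum : α₁ + α₂ = 1 := by
    rw [hα₁, hα₂]; field_simp; exact hs_def.symm
  set c : ℝ := k / α₂ with hc_def
  have hcp : c * p = s := by
    rw [hc_def, hα₂]; field_simp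
  have hcpne : c * p ≠ 0 := by rw [hcp]; exact ne_of_gt hs
  have hgwe : ∀ x, g x = s ^ α₁ * (c * x) ^ α₂ := by
    intro x
    rw [hg x, hα₁']
    congr 1
    congr 1
    rw [hc_def]; ring
  have h1 : g p = s := by
    rw [hgwe p, hcp, ← Real.rpow_add hs, hsum, Real.rpow_one]
  refine ⟨h1, ?_⟩
  have hlin : HasDerivAt (fun x : ℝ => c * x) c p := by
    simpa using (hasDerivAt_id p).const_mul c
  have hpow : HasDerivAt (fun x : ℝ => (c * x) ^ α₂) (α₂ * (c * p) ^ (α₂ - 1) * c) p := by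
    have := (Real.hasDerivAt_rpow_const (x := c * p) (p := α₂) (Or.inl hcpne)).comp p hlin
    exact this
  have hfull : HasDerivAt (fun x : ℝ => s ^ α₁ * (c * x) ^ α₂)
      (s ^ α₁ * (α₂ * (c * p) ^ (α₂ - 1) * c)) p := hpow.const_mul _
  have hval : s ^ α₁ * (α₂ * (c * p) ^ (α₂ - 1) * c) = k := by
    rw [hcp, hc_def]
    have h2 : s ^ α₁ * (α₂ * s ^ (α₂ - 1) * (k / α₂)) = k * (s ^ α₁ * s ^ (α₂ - 1)) := by
      field_simp
    rw [h2, ← Real.rpow_add hs]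
    have h3 : α₁ + (α₂ - 1) = 0 := by linarith [hsum]
    rw [h3, Real.rpow_zero, mul_one]
  have : HasDerivAt g (s ^ α₁ * (α₂ * (c * p) ^ (α₂ - 1) * c)) p := by
    apply hfull.congr_of_eventuallyEq
    filter_upwards with x using hgwe x
  rwa [hval] at this
end

section
/- Let N_r, N_a, s be positive integers with s ≤ N_r and s ≤ N_a. Let U ∈ ℂ^{N_r×N_r} and Ψ ∈ ℂ^{N_a×N_a} be unitary, let R ∈ ℂ^{s×s} be invertible, let s_1,…,s_s ≥ 0 be reals and let S ∈ ℂ^{N_r×s} be the rectangular diagonal matrix with S_{ij} = s_i if i = j and 0 otherwise. Define H = U · S · [R | 0_{s×(N_a−s)}] · Ψᴴ ∈ ℂ^{N_r×N_a} and T = (1/‖R⁻¹‖_F) · Ψ · [R⁻¹ ; 0_{(N_a−s)×s}] ∈ ℂ^{N_a×s}. Let p_1,…,p_s ≥ 0 and Q = diag(p_1,…,p_s), and let σ > 0. Then det( I_{N_r} + (1/σ²) H T Q Tᴴ Hᴴ ) = ∏_{i=1}^s ( 1 + p_i s_i² / (σ² ‖R⁻¹‖_F²) ). -/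
open Matrix
open scoped ComplexOrder

/-- The Frobenius norm of a complex matrix, `‖A‖_F = (∑_{i,j} |a_{ij}|²)^{1/2}`. -/
noncomputable def frobNorm {m n : ℕ} (A : Matrix (Fin m) (Fin n) ℂ) : ℝ :=
  Real.sqrt (∑ i, ∑ j, ‖A i j‖ ^ 2)

/-- Horizontal block concatenation `[R | 0] ∈ ℂ^{s×Na}` of `R ∈ ℂ^{s×s}` with a zero block. -/
def hcatZero {s Na : ℕ} (hsa : s ≤ Na) (R : Matrix (Fin s) (Fin s) ℂ) :
    Matrix (Fin s) (Fin Na) ℂ :=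
  Matrix.of fun i j => if h : (j : ℕ) < s then R i ⟨j, h⟩ else 0

/-- Vertical block concatenation `[R ; 0] ∈ ℂ^{Na×s}` of `R ∈ ℂ^{s×s}` with a zero block. -/
def vcatZero {s Na : ℕ} (hsa : s ≤ Na) (R : Matrix (Fin s) (Fin s) ℂ) :
    Matrix (Fin Na) (Fin s) ℂ :=
  Matrix.of fun i j => if h : (i : ℕ) < s then R ⟨i, h⟩ j else 0

lemma hv_mul {s Na : ℕ} (hsa : s ≤ Na) (A B : Matrix (Fin s) (Fin s) ℂ) :
    hcatZero hsa A * vcatZero hsa B = A * B := by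
  ext i j
  simp only [hcatZero, vcatZero, Matrix.mul_apply, Matrix.of_apply]
  have h1 : ∀ k : Fin Na,
      (if h : (k : ℕ) < s then A i ⟨k, h⟩ else 0) *
        (if h : (k : ℕ) < s then B ⟨k, h⟩ j else 0) =
      (fun n : ℕ => if h : n < s then A i ⟨n, h⟩ * B ⟨n, h⟩ j else 0) (k : ℕ) := by
    intro k
    by_cases h : (k : ℕ) < s <;> simp [h]
  rw [Finset.sum_congr rfl (fun k _ => h1 k)]
  rw [Fin.sum_univ_eq_sum_range (fun n => if h : n < s then A i ⟨n, h⟩ * B ⟨n, h⟩ j else 0) Na]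
  have h2 : ∑ k : Fin s, A i k * B k j
      = ∑ n ∈ Finset.range s, (fun n : ℕ => if h : n < s then A i ⟨n, h⟩ * B ⟨n, h⟩ j else 0) n := by
    rw [← Fin.sum_univ_eq_sum_range]
    exact Finset.sum_congr rfl (fun k _ => by simp)
  rw [h2]
  exact Finset.sum_subset (Finset.range_subset_range.2 hsa) (by
      intro x _ hx
      rw [Finset.mem_range] at hx
      simp [hx]) |>.symm

lemma SQS {Nr s : ℕ} (hsr : s ≤ Nr) (sv p : Fin s → ℝ)
    (S : Matrix (Fin Nr) (Fin s) ℂ)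
    (hS : ∀ i j, S i j = if (i : ℕ) = (j : ℕ) then (sv j : ℂ) else 0) :
    S * Matrix.diagonal (fun i => (p i : ℂ)) * Sᴴ =
      Matrix.diagonal (fun i : Fin Nr =>
        if h : (i : ℕ) < s then ((p ⟨i, h⟩ * sv ⟨i, h⟩ ^ 2 : ℝ) : ℂ) else 0) := by
  ext i j
  rw [Matrix.mul_apply]
  by_cases hij : i = j
  · subst hij
    by_cases h : (i : ℕ) < s
    · rw [Finset.sum_eq_single ⟨(i : ℕ), h⟩]
      · simp [Matrix.mul_diagonal, Matrix.conjTranspose_apply, hS, Matrix.diagonal_apply, h]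
        push_cast
        ring
      · intro k _ hk
        have : (i : ℕ) ≠ (k : ℕ) := fun e => hk (by simp [Fin.ext_iff, ← e])
        simp [Matrix.mul_diagonal, Matrix.conjTranspose_apply, hS, this]
      · simp
    · have : ∀ k : Fin s, (i : ℕ) ≠ (k : ℕ) := fun k e => h (e ▸ k.isLt)
      simp [Matrix.mul_diagonal, Matrix.conjTranspose_apply, hS, this, Matrix.diagonal_apply, h]
  · have : ∀ k : Fin s, ¬((i : ℕ) = (k : ℕ) ∧ (j : ℕ) = (k : ℕ)) := by
      rintro k ⟨e1, e2⟩; exact hij (Fin.ext (e1.trans e2.symm))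
    simp only [Matrix.mul_diagonal, Matrix.conjTranspose_apply, hS, Matrix.diagonal_apply, hij,
      if_false]
    rw [Finset.sum_eq_zero]
    intro k _
    rcases Decidable.em ((i : ℕ) = (k : ℕ)) with e | e
    · have : (j : ℕ) ≠ (k : ℕ) := fun e2 => this k ⟨e, e2⟩
      simp [e, this]
    · simp [e]

lemma frobNorm_pos {m n : ℕ} (A : Matrix (Fin m) (Fin n) ℂ) (hA : A ≠ 0) :
    0 < frobNorm A := by
  rw [frobNorm, Real.sqrt_pos]
  rcases lt_or_eq_of_le (Finset.sum_nonneg fun i _ => Finset.sum_nonneg fun j _ => by positivity :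
      (0:ℝ) ≤ ∑ i, ∑ j, ‖A i j‖ ^ 2) with h | h
  · exact h
  · exfalso
    apply hA
    ext i j
    have h1 := (Finset.sum_eq_zero_iff_of_nonneg
      (fun i _ => Finset.sum_nonneg fun j _ => by positivity)).1 h.symm i (Finset.mem_univ i)
    have h2 := (Finset.sum_eq_zero_iff_of_nonneg (fun j _ => by positivity)).1 h1 j
      (Finset.mem_univ j)
    simpa using h2

/-- The computation underlying Proposition 1 of the paper: with
`H = U S [R | 0] Ψᴴ` (GSVD form) and the GSVD-based transmit beamformer
`T = (1/‖R⁻¹‖_F) Ψ [R⁻¹ ; 0]`, and diagonal power loading `Q = diag(p₁,…,p_s)`,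
`det(I + (1/σ²) H T Q Tᴴ Hᴴ) = ∏ᵢ (1 + pᵢ sᵢ²/(σ² ‖R⁻¹‖_F²))`. -/
theorem gsvd_relaying_determinant
    (Nr Na s : ℕ) (hs : 0 < s) (hsr : s ≤ Nr) (hsa : s ≤ Na)
    (U : Matrix (Fin Nr) (Fin Nr) ℂ) (hU : U ∈ Matrix.unitaryGroup (Fin Nr) ℂ)
    (Ψ : Matrix (Fin Na) (Fin Na) ℂ) (hΨ : Ψ ∈ Matrix.unitaryGroup (Fin Na) ℂ)
    (R : Matrix (Fin s) (Fin s) ℂ) (hR : IsUnit R)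
    (sv : Fin s → ℝ) (hsv : ∀ i, 0 ≤ sv i)
    (S : Matrix (Fin Nr) (Fin s) ℂ)
    (hS : ∀ i j, S i j = if (i : ℕ) = (j : ℕ) then (sv j : ℂ) else 0)
    (p : Fin s → ℝ) (hp : ∀ i, 0 ≤ p i) (σ : ℝ) (hσ : 0 < σ)
    (H : Matrix (Fin Nr) (Fin Na) ℂ) (hH : H = U * S * hcatZero hsa R * Ψᴴ)
    (T : Matrix (Fin Na) (Fin s) ℂ)
    (hT : T = ((frobNorm R⁻¹ : ℝ) : ℂ)⁻¹ • (Ψ * vcatZero hsa R⁻¹)) :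
    (1 + ((σ ^ 2 : ℝ) : ℂ)⁻¹ •
        (H * T * Matrix.diagonal (fun i => (p i : ℂ)) * Tᴴ * Hᴴ)).det =
      ((∏ i, (1 + p i * sv i ^ 2 / (σ ^ 2 * frobNorm R⁻¹ ^ 2)) : ℝ) : ℂ) := by
  set c := frobNorm R⁻¹ with hcdef
  -- R⁻¹ ≠ 0 and c > 0
  have hRR : R * R⁻¹ = 1 := Matrix.mul_nonsing_inv R ((Matrix.isUnit_iff_isUnit_det R).1 hR)
  have hRne : R⁻¹ ≠ 0 := by
    intro h0
    have : (1 : Matrix (Fin s) (Fin s) ℂ) = 0 := by rw [← hRR, h0, Matrix.mul_zero]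
    have := congrFun (congrFun this ⟨0, hs⟩) ⟨0, hs⟩
    simp [Matrix.one_apply] at this
  have hc : 0 < c := frobNorm_pos _ hRne
  have hcC : ((c : ℂ)) ≠ 0 := by exact_mod_cast hc.ne'
  have hσC : ((σ : ℂ)) ≠ 0 := by exact_mod_cast hσ.ne'
  have hΨ1 : Ψᴴ * Ψ = 1 := by rw [← Matrix.star_eq_conjTranspose]; exact hΨ.1
  have hU2 : U * Uᴴ = 1 := by rw [← Matrix.star_eq_conjTranspose]; exact hU.2
  -- H * T
  have hM : H * T = ((c : ℂ))⁻¹ • (U * S) := by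
    rw [hH, hT, Matrix.mul_smul]
    congr 1
    rw [Matrix.mul_assoc (U * S * hcatZero hsa R), ← Matrix.mul_assoc Ψᴴ, hΨ1, Matrix.one_mul,
      Matrix.mul_assoc (U * S), hv_mul, hRR, Matrix.mul_one]
  -- the inner matrix
  set d : Fin Nr → ℂ := fun i =>
    if h : (i : ℕ) < s then ((p ⟨i, h⟩ * sv ⟨i, h⟩ ^ 2 : ℝ) : ℂ) else 0 with hd
  set e : ℂ := ((σ ^ 2 : ℝ) : ℂ)⁻¹ * (((c : ℂ))⁻¹ * ((c : ℂ))⁻¹) with he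
  have key : (1 : Matrix (Fin Nr) (Fin Nr) ℂ) + ((σ ^ 2 : ℝ) : ℂ)⁻¹ •
      (H * T * Matrix.diagonal (fun i => (p i : ℂ)) * Tᴴ * Hᴴ) =
      U * Matrix.diagonal (fun i => 1 + e * d i) * Uᴴ := by
    have h1 : H * T * Matrix.diagonal (fun i => (p i : ℂ)) * Tᴴ * Hᴴ
        = H * T * Matrix.diagonal (fun i => (p i : ℂ)) * (H * T)ᴴ := by
      rw [Matrix.mul_assoc (H * T * Matrix.diagonal (fun i => (p i : ℂ))),
        ← Matrix.conjTranspose_mul]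
    have hstar : star ((c : ℂ))⁻¹ = ((c : ℂ))⁻¹ := by
      simp [star_inv₀, Complex.star_def, Complex.conj_ofReal]
    have h2 : H * T * Matrix.diagonal (fun i => (p i : ℂ)) * (H * T)ᴴ
        = (((c : ℂ))⁻¹ * ((c : ℂ))⁻¹) •
          (U * (S * Matrix.diagonal (fun i => (p i : ℂ)) * Sᴴ) * Uᴴ) := by
      rw [hM, Matrix.conjTranspose_smul, hstar, Matrix.smul_mul, Matrix.smul_mul,
        Matrix.mul_smul, smul_smul, Matrix.conjTranspose_mul]
      simp only [Matrix.mul_assoc]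
    rw [h1, h2, SQS hsr sv p S hS, smul_smul, ← he]
    have hdiag : Matrix.diagonal (fun i => 1 + e * d i)
        = 1 + e • Matrix.diagonal d := by
      ext i j
      by_cases h : i = j <;>
        simp [Matrix.diagonal_apply, Matrix.one_apply, h]
    rw [hdiag, Matrix.mul_add, Matrix.add_mul, Matrix.mul_one, hU2,
      Matrix.mul_smul, Matrix.smul_mul]
  rw [key, Matrix.det_mul, Matrix.det_mul, Matrix.det_diagonal]
  have hdet1 : U.det * Uᴴ.det = 1 := by rw [← Matrix.det_mul, hU2, Matrix.det_one]
  have hre : U.det * (∏ i, (1 + e * d i)) * Uᴴ.det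
      = (∏ i, (1 + e * d i)) * (U.det * Uᴴ.det) := by ring
  rw [hre, hdet1, mul_one]
  -- the product
  have hfac : ∀ i : Fin s,
      (1 : ℂ) + e * ((p i * sv i ^ 2 : ℝ) : ℂ)
        = ((1 + p i * sv i ^ 2 / (σ ^ 2 * c ^ 2) : ℝ) : ℂ) := by
    intro i
    rw [he]
    push_cast
    field_simp
  rw [Complex.ofReal_prod]
  have goalr : ∏ i : Fin Nr, (1 + e * d i)
      = ∏ i : Fin s, ((1 + p i * sv i ^ 2 / (σ ^ 2 * c ^ 2) : ℝ) : ℂ) := by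
    have h3 : ∀ i : Fin Nr, (1 + e * d i)
        = (fun n : ℕ => if h : n < s
            then ((1 + p ⟨n, h⟩ * sv ⟨n, h⟩ ^ 2 / (σ ^ 2 * c ^ 2) : ℝ) : ℂ) else 1) (i : ℕ) := by
      intro i
      by_cases h : (i : ℕ) < s
      · simp only [hd, h, dif_pos]
        exact hfac ⟨i, h⟩
      · simp [hd, h]
    rw [Finset.prod_congr rfl (fun i _ => h3 i)]
    rw [Fin.prod_univ_eq_prod_range (fun n => if h : n < s
      then ((1 + p ⟨n, h⟩ * sv ⟨n, h⟩ ^ 2 / (σ ^ 2 * c ^ 2) : ℝ) : ℂ) else 1) Nr]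
    have h4 : ∏ i : Fin s, ((1 + p i * sv i ^ 2 / (σ ^ 2 * c ^ 2) : ℝ) : ℂ)
        = ∏ n ∈ Finset.range s, (fun n : ℕ => if h : n < s
            then ((1 + p ⟨n, h⟩ * sv ⟨n, h⟩ ^ 2 / (σ ^ 2 * c ^ 2) : ℝ) : ℂ) else 1) n := by
      rw [← Fin.prod_univ_eq_prod_range]
      exact Finset.prod_congr rfl (fun k _ => by simp)
    rw [h4]
    exact (Finset.prod_subset (Finset.range_subset_range.2 hsr) (by
      intro x _ hx
      rw [Finset.mem_range] at hx
      simp [hx])).symm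
  exact goalr
end

section
/- Let N_e, N_a, N_r, s be positive integers with s ≤ N_e, s ≤ N_a and s ≤ N_r. Let V_a ∈ ℂ^{N_e×N_e}, Ψ_a ∈ ℂ^{N_a×N_a}, V_r ∈ ℂ^{N_e×N_e}, Ψ_r ∈ ℂ^{N_r×N_r} be unitary; let R_a, R_r ∈ ℂ^{s×s} be invertible; let s_{ae,1},…,s_{ae,s} ≥ 0 and s_{re,1},…,s_{re,s} ≥ 0 be reals, and let S_{ae}, S_{re} ∈ ℂ^{N_e×s} be the rectangular diagonal matrices with (S_{ae})_{ii} = s_{ae,i}, (S_{re})_{ii} = s_{re,i} and zeros elsewhere. Define H_{ae} = V_a S_{ae} [R_a | 0] Ψ_aᴴ, H_{re} = V_r S_{re} [R_r | 0] Ψ_rᴴ, T_a = (1/‖R_a⁻¹‖_F) Ψ_a [R_a⁻¹ ; 0], T_r = (1/‖R_r⁻¹‖_F) Ψ_r [R_r⁻¹ ; 0]. Let p_{a,1},…,p_{a,s} ≥ 0 and p_{r,1},…,p_{r,s} ≥ 0, set D_a = diag(√p_{a,1},…,√p_{a,s}), D_r = diag(√p_{r,1},…,√p_{r,s}), and let H̃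 ∈ ℂ^{2N_e×s} be the vertical stack [H_{ae} T_a D_a ; H_{re} T_r D_r]. Then for every σ > 0, det( I_{2N_e} + (1/σ²) H̃ H̃ᴴ ) = ∏_{i=1}^s ( 1 + p_{a,i} s_{ae,i}² / (σ² ‖R_a⁻¹‖_F²) + p_{r,i} s_{re,i}² / (σ² ‖R_r⁻¹‖_F²) ). -/
open Matrix
open scoped ComplexOrder

lemma frobNorm_nonneg {m n : ℕ} (A : Matrix (Fin m) (Fin n) ℂ) : 0 ≤ frobNorm A :=
  Real.sqrt_nonneg _

lemma hcat_mul_vcat {s Na : ℕ} (h : s ≤ Na) (R R' : Matrix (Fin s) (Fin s) ℂ) :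
    hcatZero h R * vcatZero h R' = R * R' := by
  ext i j
  set f : ℕ → ℂ := fun k => if hk : k < s then R i ⟨k, hk⟩ * R' ⟨k, hk⟩ j else 0 with hf
  have key : ∀ k : Fin Na, (hcatZero h R) i k * (vcatZero h R') k j = f (k : ℕ) := by
    intro k
    by_cases hk : (k : ℕ) < s <;> simp [hcatZero, vcatZero, f, hk]
  rw [Matrix.mul_apply, Matrix.mul_apply]
  calc ∑ k : Fin Na, (hcatZero h R) i k * (vcatZero h R') k j
      = ∑ k : Fin Na, f (k : ℕ) := Finset.sum_congr rfl fun k _ => key k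
    _ = ∑ k ∈ Finset.range Na, f k := Fin.sum_univ_eq_sum_range f Na
    _ = ∑ k ∈ Finset.range s, f k := by
        refine (Finset.sum_subset (Finset.range_subset_range.mpr h) ?_).symm
        intro k _ hk
        have : ¬ k < s := by simpa using hk
        simp [f, this]
    _ = ∑ k : Fin s, f (k : ℕ) := (Fin.sum_univ_eq_sum_range f s).symm
    _ = ∑ k : Fin s, R i k * R' k j := by
        refine Finset.sum_congr rfl fun k _ => ?_
        simp [f, k.isLt]

lemma rect_diag_mul {Ne s : ℕ} (hse : s ≤ Ne) (v : Fin s → ℝ)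
    (S : Matrix (Fin Ne) (Fin s) ℂ)
    (hS : ∀ i j, S i j = if (i : ℕ) = (j : ℕ) then (v j : ℂ) else 0) :
    Sᴴ * S = Matrix.diagonal fun i => ((v i : ℂ) * (v i : ℂ)) := by
  ext i j
  rw [Matrix.mul_apply]
  have hi : (i : ℕ) < Ne := lt_of_lt_of_le i.isLt hse
  rw [Finset.sum_eq_single (⟨(i : ℕ), hi⟩ : Fin Ne)]
  · simp only [Matrix.conjTranspose_apply, hS]
    by_cases hij : i = j
    · subst hij
      simp [Matrix.diagonal]
    · have : (i : ℕ) ≠ (j : ℕ) := fun hc => hij (Fin.ext hc)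
      simp [this, Matrix.diagonal_apply_ne _ hij]
  · intro k _ hk
    have : (k : ℕ) ≠ (i : ℕ) := by
      intro hc
      exact hk (Fin.ext hc)
    simp [Matrix.conjTranspose_apply, hS, this]
  · intro hk
    exact absurd (Finset.mem_univ _) hk

/-- Eavesdropper-side computation in the proof of Proposition 1 of the paper (Appendix C):
with GSVD channel decompositions `H_ae = V_a S_ae [R_a|0] Ψ_aᴴ`,
`H_re = V_r S_re [R_r|0] Ψ_rᴴ`, the GSVD beamformers `T_a, T_r`, power loadings
`D_a = diag(√p_{a,i})`, `D_r = diag(√p_{r,i})`, and Eve's stacked two-phase channel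
`H̃ = [H_ae T_a D_a ; H_re T_r D_r]`, one has
`det(I + (1/σ²) H̃ H̃ᴴ) = ∏ᵢ (1 + p_{a,i} s_{ae,i}²/(σ²‖R_a⁻¹‖_F²) + p_{r,i} s_{re,i}²/(σ²‖R_r⁻¹‖_F²))`. -/
theorem gsvd_eavesdropper_determinant
    (Ne Na Nr s : ℕ) (hs : 0 < s) (hse : s ≤ Ne) (hsa : s ≤ Na) (hsr : s ≤ Nr)
    (Va : Matrix (Fin Ne) (Fin Ne) ℂ) (hVa : Va ∈ Matrix.unitaryGroup (Fin Ne) ℂ)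
    (Ψa : Matrix (Fin Na) (Fin Na) ℂ) (hΨa : Ψa ∈ Matrix.unitaryGroup (Fin Na) ℂ)
    (Vr : Matrix (Fin Ne) (Fin Ne) ℂ) (hVr : Vr ∈ Matrix.unitaryGroup (Fin Ne) ℂ)
    (Ψr : Matrix (Fin Nr) (Fin Nr) ℂ) (hΨr : Ψr ∈ Matrix.unitaryGroup (Fin Nr) ℂ)
    (Ra : Matrix (Fin s) (Fin s) ℂ) (hRa : IsUnit Ra)
    (Rr : Matrix (Fin s) (Fin s) ℂ) (hRr : IsUnit Rr)
    (sae sre : Fin s → ℝ) (hsae : ∀ i, 0 ≤ sae i) (hsre : ∀ i, 0 ≤ sre i)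
    (Sae : Matrix (Fin Ne) (Fin s) ℂ)
    (hSae : ∀ i j, Sae i j = if (i : ℕ) = (j : ℕ) then (sae j : ℂ) else 0)
    (Sre : Matrix (Fin Ne) (Fin s) ℂ)
    (hSre : ∀ i j, Sre i j = if (i : ℕ) = (j : ℕ) then (sre j : ℂ) else 0)
    (Hae : Matrix (Fin Ne) (Fin Na) ℂ) (hHae : Hae = Va * Sae * hcatZero hsa Ra * Ψaᴴ)
    (Hre : Matrix (Fin Ne) (Fin Nr) ℂ) (hHre : Hre = Vr * Sre * hcatZero hsr Rr * Ψrᴴ)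
    (Ta : Matrix (Fin Na) (Fin s) ℂ)
    (hTa : Ta = ((frobNorm Ra⁻¹ : ℝ) : ℂ)⁻¹ • (Ψa * vcatZero hsa Ra⁻¹))
    (Tr : Matrix (Fin Nr) (Fin s) ℂ)
    (hTr : Tr = ((frobNorm Rr⁻¹ : ℝ) : ℂ)⁻¹ • (Ψr * vcatZero hsr Rr⁻¹))
    (pa pr : Fin s → ℝ) (hpa : ∀ i, 0 ≤ pa i) (hpr : ∀ i, 0 ≤ pr i)
    (Da : Matrix (Fin s) (Fin s) ℂ) (hDa : Da = Matrix.diagonal fun i => (Real.sqrt (pa i) : ℂ))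
    (Dr : Matrix (Fin s) (Fin s) ℂ) (hDr : Dr = Matrix.diagonal fun i => (Real.sqrt (pr i) : ℂ))
    (Htil : Matrix (Fin Ne ⊕ Fin Ne) (Fin s) ℂ)
    (hHtil : Htil = Matrix.fromRows (Hae * Ta * Da) (Hre * Tr * Dr)) :
    ∀ σ : ℝ, 0 < σ →
      (1 + ((σ ^ 2 : ℝ) : ℂ)⁻¹ • (Htil * Htilᴴ)).det =
        ((∏ i, (1 + pa i * sae i ^ 2 / (σ ^ 2 * frobNorm Ra⁻¹ ^ 2)
                  + pr i * sre i ^ 2 / (σ ^ 2 * frobNorm Rr⁻¹ ^ 2)) : ℝ) : ℂ) := by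
  intro σ hσ
  -- basic nonvanishing facts
  have hRadet : IsUnit Ra.det := (Matrix.isUnit_iff_isUnit_det Ra).mp hRa
  have hRrdet : IsUnit Rr.det := (Matrix.isUnit_iff_isUnit_det Rr).mp hRr
  have hRainv : Ra⁻¹ ≠ 0 := by
    intro h
    have h1 : Ra⁻¹ * Ra = 1 := Matrix.nonsing_inv_mul Ra hRadet
    rw [h, Matrix.zero_mul] at h1
    have := congrFun (congrFun h1 ⟨0, hs⟩) ⟨0, hs⟩
    simp [Matrix.one_apply] at this
  have hRrinv : Rr⁻¹ ≠ 0 := by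
    intro h
    have h1 : Rr⁻¹ * Rr = 1 := Matrix.nonsing_inv_mul Rr hRrdet
    rw [h, Matrix.zero_mul] at h1
    have := congrFun (congrFun h1 ⟨0, hs⟩) ⟨0, hs⟩
    simp [Matrix.one_apply] at this
  have hfa : 0 < frobNorm Ra⁻¹ := frobNorm_pos _ hRainv
  have hfr : 0 < frobNorm Rr⁻¹ := frobNorm_pos _ hRrinv
  set ca : ℝ := (frobNorm Ra⁻¹)⁻¹ with hca
  set cr : ℝ := (frobNorm Rr⁻¹)⁻¹ with hcr
  -- simplify Hae * Ta
  have hΨa1 : Ψaᴴ * Ψa = 1 := by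
    have := hΨa.1
    rwa [Matrix.star_eq_conjTranspose] at this
  have hΨr1 : Ψrᴴ * Ψr = 1 := by
    have := hΨr.1
    rwa [Matrix.star_eq_conjTranspose] at this
  have hVa1 : Vaᴴ * Va = 1 := by
    have := hVa.1
    rwa [Matrix.star_eq_conjTranspose] at this
  have hVr1 : Vrᴴ * Vr = 1 := by
    have := hVr.1
    rwa [Matrix.star_eq_conjTranspose] at this
  have key_a : hcatZero hsa Ra * Ψaᴴ * (Ψa * vcatZero hsa Ra⁻¹) = 1 := by
    rw [Matrix.mul_assoc, ← Matrix.mul_assoc Ψaᴴ, hΨa1, Matrix.one_mul,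
      hcat_mul_vcat, Matrix.mul_nonsing_inv Ra hRadet]
  have key_r : hcatZero hsr Rr * Ψrᴴ * (Ψr * vcatZero hsr Rr⁻¹) = 1 := by
    rw [Matrix.mul_assoc, ← Matrix.mul_assoc Ψrᴴ, hΨr1, Matrix.one_mul,
      hcat_mul_vcat, Matrix.mul_nonsing_inv Rr hRrdet]
  have hA : Hae * Ta * Da = ((ca : ℂ)) • (Va * Sae * Da) := by
    rw [hHae, hTa, Matrix.mul_smul, Matrix.smul_mul]
    congr 1
    · rw [hca, Complex.ofReal_inv]
    · rw [Matrix.mul_assoc (Va * Sae) (hcatZero hsa Ra) Ψaᴴ,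
        Matrix.mul_assoc (Va * Sae) (hcatZero hsa Ra * Ψaᴴ) (Ψa * vcatZero hsa Ra⁻¹),
        key_a, Matrix.mul_one]
  have hB : Hre * Tr * Dr = ((cr : ℂ)) • (Vr * Sre * Dr) := by
    rw [hHre, hTr, Matrix.mul_smul, Matrix.smul_mul]
    congr 1
    · rw [hcr, Complex.ofReal_inv]
    · rw [Matrix.mul_assoc (Vr * Sre) (hcatZero hsr Rr) Ψrᴴ,
        Matrix.mul_assoc (Vr * Sre) (hcatZero hsr Rr * Ψrᴴ) (Ψr * vcatZero hsr Rr⁻¹),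
        key_r, Matrix.mul_one]
  -- gram matrices
  have hgramA : (Va * Sae * Da)ᴴ * (Va * Sae * Da)
      = Matrix.diagonal fun i => ((pa i * sae i ^ 2 : ℝ) : ℂ) := by
    have h1 : (Va * Sae * Da)ᴴ * (Va * Sae * Da) = Daᴴ * (Saeᴴ * Sae) * Da := by
      rw [Matrix.conjTranspose_mul, Matrix.conjTranspose_mul]
      simp only [Matrix.mul_assoc]
      rw [← Matrix.mul_assoc Vaᴴ Va, hVa1, Matrix.one_mul]
    rw [h1, rect_diag_mul hse sae Sae hSae, hDa, Matrix.diagonal_conjTranspose,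
      Matrix.diagonal_mul_diagonal, Matrix.diagonal_mul_diagonal]
    refine congrArg Matrix.diagonal (funext fun i => ?_)
    have h3 : ((Real.sqrt (pa i) : ℝ) : ℂ) ^ 2 = ((pa i : ℝ) : ℂ) := by
      rw [← Complex.ofReal_pow, Real.sq_sqrt (hpa i)]
    simp only [Pi.star_apply, RCLike.star_def, Complex.conj_ofReal]
    push_cast
    linear_combination ((sae i : ℂ)) ^ 2 * h3
  have hgramB : (Vr * Sre * Dr)ᴴ * (Vr * Sre * Dr)
      = Matrix.diagonal fun i => ((pr i * sre i ^ 2 : ℝ) : ℂ) := by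
    have h1 : (Vr * Sre * Dr)ᴴ * (Vr * Sre * Dr) = Drᴴ * (Sreᴴ * Sre) * Dr := by
      rw [Matrix.conjTranspose_mul, Matrix.conjTranspose_mul]
      simp only [Matrix.mul_assoc]
      rw [← Matrix.mul_assoc Vrᴴ Vr, hVr1, Matrix.one_mul]
    rw [h1, rect_diag_mul hse sre Sre hSre, hDr, Matrix.diagonal_conjTranspose,
      Matrix.diagonal_mul_diagonal, Matrix.diagonal_mul_diagonal]
    refine congrArg Matrix.diagonal (funext fun i => ?_)
    have h3 : ((Real.sqrt (pr i) : ℝ) : ℂ) ^ 2 = ((pr i : ℝ) : ℂ) := by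
      rw [← Complex.ofReal_pow, Real.sq_sqrt (hpr i)]
    simp only [Pi.star_apply, RCLike.star_def, Complex.conj_ofReal]
    push_cast
    linear_combination ((sre i : ℂ)) ^ 2 * h3
  -- the full gram matrix is diagonal
  have hgram : Htilᴴ * Htil = Matrix.diagonal
      fun i => ((ca ^ 2 * (pa i * sae i ^ 2) + cr ^ 2 * (pr i * sre i ^ 2) : ℝ) : ℂ) := by
    rw [hHtil, Matrix.conjTranspose_fromRows_eq_fromCols_conjTranspose,
      Matrix.fromCols_mul_fromRows, hA, hB]
    rw [Matrix.conjTranspose_smul, Matrix.conjTranspose_smul,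
      Matrix.smul_mul, Matrix.smul_mul, Matrix.mul_smul, Matrix.mul_smul,
      hgramA, hgramB]
    have hsca : star ((ca : ℝ) : ℂ) = ((ca : ℝ) : ℂ) := Complex.conj_ofReal _
    have hscr : star ((cr : ℝ) : ℂ) = ((cr : ℝ) : ℂ) := Complex.conj_ofReal _
    rw [hsca, hscr, smul_smul, smul_smul]
    ext i j
    by_cases hij : i = j
    · subst hij
      simp only [Matrix.add_apply, Matrix.smul_apply, Matrix.diagonal_apply_eq, smul_eq_mul]
      push_cast
      ring
    · simp [Matrix.diagonal_apply_ne _ hij, hij]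
  -- determinant computation
  have hσ2 : (σ : ℝ) ^ 2 ≠ 0 := pow_ne_zero 2 (ne_of_gt hσ)
  have step1 : (1 + ((σ ^ 2 : ℝ) : ℂ)⁻¹ • (Htil * Htilᴴ)).det
      = (1 + ((σ ^ 2 : ℝ) : ℂ)⁻¹ • (Htilᴴ * Htil)).det := by
    rw [show ((σ ^ 2 : ℝ) : ℂ)⁻¹ • (Htil * Htilᴴ) = Htil * (((σ ^ 2 : ℝ) : ℂ)⁻¹ • Htilᴴ) by
      rw [Matrix.mul_smul]]
    rw [Matrix.det_one_add_mul_comm, Matrix.smul_mul]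
  rw [step1, hgram]
  have hdiag : (1 : Matrix (Fin s) (Fin s) ℂ) + ((σ ^ 2 : ℝ) : ℂ)⁻¹ • (Matrix.diagonal
      fun i => ((ca ^ 2 * (pa i * sae i ^ 2) + cr ^ 2 * (pr i * sre i ^ 2) : ℝ) : ℂ))
      = Matrix.diagonal fun i => ((1 + (pa i * sae i ^ 2 / (σ ^ 2 * frobNorm Ra⁻¹ ^ 2)
          + pr i * sre i ^ 2 / (σ ^ 2 * frobNorm Rr⁻¹ ^ 2)) : ℝ) : ℂ) := by
    ext i j
    by_cases hij : i = j
    · subst hij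
      simp only [Matrix.add_apply, Matrix.one_apply_eq, Matrix.smul_apply,
        Matrix.diagonal_apply_eq, smul_eq_mul]
      rw [show ((σ ^ 2 : ℝ) : ℂ)⁻¹ = (((σ ^ 2)⁻¹ : ℝ) : ℂ) by push_cast; ring]
      rw [show (1 : ℂ) = ((1 : ℝ) : ℂ) by norm_num]
      rw [← Complex.ofReal_mul, ← Complex.ofReal_add]
      congr 1
      rw [hca, hcr]
      ring
    · simp [Matrix.diagonal_apply_ne _ hij, Matrix.one_apply_ne hij]
  rw [hdiag, Matrix.det_diagonal, ← Complex.ofReal_prod]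
  norm_cast
  exact Finset.prod_congr rfl fun i _ => by ring
end
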